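/- Let X, Y, Z, M₁₂, M₂₃, M₃₁ be finite-valued random variables satisfying: (i) H(X | M₁₂, M₃₁) = 0; (ii) H(Y | M₁₂, M₂₃) = 0; (iii) H(Z | M₂₃, M₃₁) = 0; and (iv) I(M₁₂, M₃₁ ; Y, Z | X) = 0 (privacy against Alice). Then H(M₂₃) ≥ H(Y, Z | X). -/

import Mathlib

open scoped BigOperators

noncomputable section

/-- Probability that the random variable `X` takes the value `a`,
with respect to the probability mass function `p` on the finite sample space `Ω`. -/
def prob {Ω : Type*} [Fintype Ω] {α : Type*} [DecidableEq α]
    (p : Ω → ℝ) (X : Ω → α) (a : α) : ℝ :=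
  ∑ ω, if X ω = a then p ω else 0

/-- Shannon entropy (base 2) of the random variable `X`. -/
def ent {Ω : Type*} [Fintype Ω] {α : Type*} [Fintype α] [DecidableEq α]
    (p : Ω → ℝ) (X : Ω → α) : ℝ :=
  -∑ a, prob p X a * Real.logb 2 (prob p X a)

/-- Conditional entropy `H(X|Y)`. -/
def condEnt {Ω : Type*} [Fintype Ω] {α β : Type*} [Fintype α] [DecidableEq α]
    [Fintype β] [DecidableEq β] (p : Ω → ℝ) (X : Ω → α) (Y : Ω → β) : ℝ :=
  ent p (fun ω => (X ω, Y ω)) - ent p Y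

/-- Mutual information `I(X;Y)`. -/
def mi {Ω : Type*} [Fintype Ω] {α β : Type*} [Fintype α] [DecidableEq α]
    [Fintype β] [DecidableEq β] (p : Ω → ℝ) (X : Ω → α) (Y : Ω → β) : ℝ :=
  ent p X + ent p Y - ent p (fun ω => (X ω, Y ω))

/-- Conditional mutual information `I(X;Y|Z)`. -/
def cmi {Ω : Type*} [Fintype Ω] {α β γ : Type*} [Fintype α] [DecidableEq α]
    [Fintype β] [DecidableEq β] [Fintype γ] [DecidableEq γ]
    (p : Ω → ℝ) (X : Ω → α) (Y : Ω → β) (Z : Ω → γ) : ℝ :=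
  ent p (fun ω => (X ω, Z ω)) + ent p (fun ω => (Y ω, Z ω))
    - ent p (fun ω => (X ω, Y ω, Z ω)) - ent p Z


set_option linter.unusedSectionVars false
set_option linter.unusedVariables false

section lemmas
variable {Ω : Type*} [Fintype Ω] {α β γ : Type*}
  [Fintype α] [DecidableEq α] [Fintype β] [DecidableEq β] [Fintype γ] [DecidableEq γ]
  (p : Ω → ℝ)

lemma prob_nonneg (hp : ∀ ω, 0 ≤ p ω) (X : Ω → α) (a : α) : 0 ≤ prob p X a := by
  unfold prob
  exact Finset.sum_nonneg fun ω _ => by split <;> simp [hp ω]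

lemma sum_prob (hsum : ∑ ω, p ω = 1) (X : Ω → α) : ∑ a, prob p X a = 1 := by
  unfold prob
  rw [Finset.sum_comm, ← hsum]
  exact Finset.sum_congr rfl fun ω _ => by simp [Finset.sum_ite_eq]

lemma ent_comp_inj {f : α → β} (hf : Function.Injective f) (W : Ω → α) (V : Ω → β)
    (h : ∀ ω, V ω = f (W ω)) : ent p V = ent p W := by
  have hp1 : ∀ a, prob p V (f a) = prob p W a := by
    intro a; unfold prob
    exact Finset.sum_congr rfl fun ω _ => by rw [h ω]; simp [hf.eq_iff]
  have hp0 : ∀ b, (∀ a, f a ≠ b) → prob p V b = 0 := by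
    intro b hb; unfold prob
    exact Finset.sum_eq_zero fun ω _ => by rw [h ω]; simp [hb (W ω)]
  unfold ent
  congr 1
  calc ∑ b, prob p V b * Real.logb 2 (prob p V b)
      = ∑ b ∈ Finset.univ.image f, prob p V b * Real.logb 2 (prob p V b) := by
        refine (Finset.sum_subset (Finset.subset_univ _) fun b _ hb => ?_).symm
        have hb' : ∀ a, f a ≠ b := fun a hab =>
          hb (Finset.mem_image.mpr ⟨a, Finset.mem_univ a, hab⟩)
        simp [hp0 b hb']
    _ = ∑ a, prob p V (f a) * Real.logb 2 (prob p V (f a)) :=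
        Finset.sum_image (fun x _ y _ hxy => hf hxy)
    _ = ∑ a, prob p W a * Real.logb 2 (prob p W a) := by simp only [hp1]

lemma ent_const (hsum : ∑ ω, p ω = 1) (c : β) : ent p (fun _ : Ω => c) = 0 := by
  have hb : ∀ b, prob p (fun _ : Ω => c) b = if c = b then 1 else 0 := by
    intro b; unfold prob; by_cases h : c = b <;> simp [h, hsum]
  unfold ent
  rw [Finset.sum_eq_single c]
  · simp [hb]
  · intro b _ hbc; simp [hb, Ne.symm hbc]
  · intro hc; exact absurd (Finset.mem_univ c) hc
lemma marg_xz (X : Ω → α) (Y : Ω → β) (Z : Ω → γ) (a : α) (c : γ) :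
    prob p (fun ω => (X ω, Z ω)) (a, c)
      = ∑ b, prob p (fun ω => (X ω, Y ω, Z ω)) (a, b, c) := by
  unfold prob
  rw [Finset.sum_comm]
  refine Finset.sum_congr rfl fun ω _ => ?_
  by_cases h1 : X ω = a <;> by_cases h2 : Z ω = c <;>
    simp [Prod.ext_iff, h1, h2, Finset.sum_ite_eq]

lemma marg_yz (X : Ω → α) (Y : Ω → β) (Z : Ω → γ) (b : β) (c : γ) :
    prob p (fun ω => (Y ω, Z ω)) (b, c)
      = ∑ a, prob p (fun ω => (X ω, Y ω, Z ω)) (a, b, c) := by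
  unfold prob
  rw [Finset.sum_comm]
  refine Finset.sum_congr rfl fun ω _ => ?_
  by_cases h1 : Y ω = b <;> by_cases h2 : Z ω = c <;>
    simp [Prod.ext_iff, h1, h2, Finset.sum_ite_eq]

lemma marg_z (X : Ω → α) (Z : Ω → γ) (c : γ) :
    prob p Z c = ∑ a, prob p (fun ω => (X ω, Z ω)) (a, c) := by
  unfold prob
  rw [Finset.sum_comm]
  refine Finset.sum_congr rfl fun ω _ => ?_
  by_cases h2 : Z ω = c <;> simp [Prod.ext_iff, h2, Finset.sum_ite_eq]
lemma swap3 (F : α → β → γ → ℝ) :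
    ∑ a, ∑ b, ∑ c, F a b c = ∑ b, ∑ c, ∑ a, F a b c := by
  rw [Finset.sum_comm]
  exact Finset.sum_congr rfl fun b _ => Finset.sum_comm

lemma swap3' (F : α → β → γ → ℝ) :
    ∑ a, ∑ b, ∑ c, F a b c = ∑ c, ∑ a, ∑ b, F a b c := by
  rw [swap3, Finset.sum_comm]
  exact Finset.sum_congr rfl fun c _ => Finset.sum_comm

lemma key_ineq (r : α → β → γ → ℝ) (u : α → γ → ℝ) (v : β → γ → ℝ) (s : γ → ℝ)
    (hr0 : ∀ a b c, 0 ≤ r a b c)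
    (hu1 : ∀ a c, u a c = ∑ b, r a b c)
    (hv1 : ∀ b c, v b c = ∑ a, r a b c)
    (hs1 : ∀ c, s c = ∑ a, u a c)
    (hrsum : ∑ a, ∑ b, ∑ c, r a b c = 1) :
    0 ≤ (-∑ a, ∑ c, u a c * Real.logb 2 (u a c))
        + (-∑ b, ∑ c, v b c * Real.logb 2 (v b c))
        - (-∑ a, ∑ b, ∑ c, r a b c * Real.logb 2 (r a b c))
        - (-∑ c, s c * Real.logb 2 (s c)) := by
  have hu0 : ∀ a c, 0 ≤ u a c := fun a c => (hu1 a c).symm ▸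
    Finset.sum_nonneg fun b _ => hr0 a b c
  have hv0 : ∀ b c, 0 ≤ v b c := fun b c => (hv1 b c).symm ▸
    Finset.sum_nonneg fun a _ => hr0 a b c
  have hs0 : ∀ c, 0 ≤ s c := fun c => (hs1 c).symm ▸
    Finset.sum_nonneg fun a _ => hu0 a c
  have hru : ∀ a b c, r a b c ≤ u a c := fun a b c => by
    rw [hu1]; exact Finset.single_le_sum (fun b _ => hr0 a b c) (Finset.mem_univ b)
  have hrv : ∀ a b c, r a b c ≤ v b c := fun a b c => by
    rw [hv1]; exact Finset.single_le_sum (fun a _ => hr0 a b c) (Finset.mem_univ a)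
  have hus : ∀ a c, u a c ≤ s c := fun a c => by
    rw [hs1]; exact Finset.single_le_sum (fun a _ => hu0 a c) (Finset.mem_univ a)
  have hrs : ∀ a b c, r a b c ≤ s c := fun a b c => le_trans (hru a b c) (hus a c)
  have hs2 : ∀ c, s c = ∑ b, v b c := by
    intro c
    rw [hs1]
    simp only [hu1, hv1]
    exact Finset.sum_comm
  have hssum : ∑ c, s c = 1 := by
    rw [← hrsum, swap3']
    exact Finset.sum_congr rfl fun c _ => by rw [hs1]; simp only [hu1]
  have hlog2 : (0:ℝ) < Real.log 2 := Real.log_pos one_lt_two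
  have A : ∑ a, ∑ b, ∑ c, r a b c * Real.logb 2 (u a c)
      = ∑ a, ∑ c, u a c * Real.logb 2 (u a c) := by
    refine Finset.sum_congr rfl fun a _ => ?_
    rw [Finset.sum_comm]
    refine Finset.sum_congr rfl fun c _ => ?_
    rw [← Finset.sum_mul, ← hu1 a c]
  have B : ∑ a, ∑ b, ∑ c, r a b c * Real.logb 2 (v b c)
      = ∑ b, ∑ c, v b c * Real.logb 2 (v b c) := by
    rw [swap3]
    refine Finset.sum_congr rfl fun b _ => ?_
    refine Finset.sum_congr rfl fun c _ => ?_
    rw [← Finset.sum_mul, ← hv1 b c]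
  have C : ∑ a, ∑ b, ∑ c, r a b c * Real.logb 2 (s c)
      = ∑ c, s c * Real.logb 2 (s c) := by
    rw [swap3']
    refine Finset.sum_congr rfl fun c _ => ?_
    rw [hs1]
    simp only [hu1]
    rw [Finset.sum_mul]
    refine Finset.sum_congr rfl fun a _ => ?_
    rw [Finset.sum_mul]
  have key : (-∑ a, ∑ c, u a c * Real.logb 2 (u a c))
        + (-∑ b, ∑ c, v b c * Real.logb 2 (v b c))
        - (-∑ a, ∑ b, ∑ c, r a b c * Real.logb 2 (r a b c))
        - (-∑ c, s c * Real.logb 2 (s c))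
      = ∑ a, ∑ b, ∑ c, r a b c *
          (Real.logb 2 (r a b c) + Real.logb 2 (s c)
            - Real.logb 2 (u a c) - Real.logb 2 (v b c)) := by
    rw [← A, ← B, ← C]
    simp only [mul_add, mul_sub, Finset.sum_add_distrib, Finset.sum_sub_distrib]
    ring
  rw [key]
  have pt : ∀ a b c, (r a b c - u a c * v b c / s c) / Real.log 2
      ≤ r a b c * (Real.logb 2 (r a b c) + Real.logb 2 (s c)
          - Real.logb 2 (u a c) - Real.logb 2 (v b c)) := by
    intro a b c
    rcases eq_or_lt_of_le (hr0 a b c) with h0 | hpos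
    · rw [← h0, zero_mul]
      have hnum : (0:ℝ) - u a c * v b c / s c ≤ 0 := by
        have : (0:ℝ) ≤ u a c * v b c / s c :=
          div_nonneg (mul_nonneg (hu0 a c) (hv0 b c)) (hs0 c)
        linarith
      exact div_nonpos_of_nonpos_of_nonneg hnum hlog2.le
    · have hu' : 0 < u a c := lt_of_lt_of_le hpos (hru a b c)
      have hv' : 0 < v b c := lt_of_lt_of_le hpos (hrv a b c)
      have hs' : 0 < s c := lt_of_lt_of_le hpos (hrs a b c)
      have harg : 0 < u a c * v b c / (r a b c * s c) := by positivity
      have h1 : Real.log (u a c * v b c / (r a b c * s c))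
          ≤ u a c * v b c / (r a b c * s c) - 1 :=
        Real.log_le_sub_one_of_pos harg
      have h2 : Real.log (u a c * v b c / (r a b c * s c))
          = Real.log (u a c) + Real.log (v b c) - Real.log (r a b c) - Real.log (s c) := by
        rw [Real.log_div (by positivity) (by positivity),
            Real.log_mul hu'.ne' hv'.ne', Real.log_mul hpos.ne' hs'.ne']
        ring
      have h3 : Real.logb 2 (r a b c) + Real.logb 2 (s c)
            - Real.logb 2 (u a c) - Real.logb 2 (v b c)
          = -(Real.log (u a c * v b c / (r a b c * s c))) / Real.log 2 := by
        rw [h2]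
        simp only [Real.logb]
        ring
      rw [h3]
      have h5 : r a b c * (u a c * v b c / (r a b c * s c) - 1)
          = u a c * v b c / s c - r a b c := by
        field_simp
      have h6 : r a b c * Real.log (u a c * v b c / (r a b c * s c))
          ≤ u a c * v b c / s c - r a b c := by
        calc r a b c * Real.log (u a c * v b c / (r a b c * s c))
            ≤ r a b c * (u a c * v b c / (r a b c * s c) - 1) :=
              mul_le_mul_of_nonneg_left h1 hpos.le
          _ = u a c * v b c / s c - r a b c := h5
      calc (r a b c - u a c * v b c / s c) / Real.log 2
          ≤ (r a b c * -(Real.log (u a c * v b c / (r a b c * s c)))) / Real.log 2 := by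
            gcongr
            linarith
        _ = r a b c * (-(Real.log (u a c * v b c / (r a b c * s c))) / Real.log 2) := by
            ring
  refine le_trans ?_ (Finset.sum_le_sum fun a _ =>
    Finset.sum_le_sum fun b _ => Finset.sum_le_sum fun c _ => pt a b c)
  have T1 : ∑ a, ∑ b, ∑ c, u a c * v b c / s c ≤ 1 := by
    rw [swap3' (fun a b c => u a c * v b c / s c)]
    calc ∑ c, ∑ a, ∑ b, u a c * v b c / s c ≤ ∑ c, s c := by
          refine Finset.sum_le_sum fun c _ => ?_
          rcases eq_or_lt_of_le (hs0 c) with h0 | hsc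
          · have hz : ∀ a b, u a c * v b c / s c = 0 := by
              intro a b
              have : u a c = 0 := le_antisymm (h0 ▸ hus a c) (hu0 a c)
              simp [this]
            simp [hz, ← h0]
          · have inner : ∀ a, ∑ b, u a c * v b c / s c = u a c := by
              intro a
              have h7 : ∑ b, u a c * v b c / s c = u a c / s c * ∑ b, v b c := by
                rw [Finset.mul_sum]
                exact Finset.sum_congr rfl fun b _ => by ring
              rw [h7, ← hs2 c, div_mul_cancel₀ _ hsc.ne']
            have e : ∑ a, ∑ b, u a c * v b c / s c = s c := by
              rw [Finset.sum_congr rfl fun a _ => inner a]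
              exact (hs1 c).symm
            exact e.le
      _ = 1 := hssum
  have T3 : ∑ a, ∑ b, ∑ c, (r a b c - u a c * v b c / s c) / Real.log 2
      = (1 - ∑ a, ∑ b, ∑ c, u a c * v b c / s c) / Real.log 2 := by
    simp only [sub_div, Finset.sum_sub_distrib, ← Finset.sum_div]
    rw [hrsum]
  rw [T3]
  exact div_nonneg (by linarith) hlog2.le
lemma cmi_nonneg (hp : ∀ ω, 0 ≤ p ω) (hsum : ∑ ω, p ω = 1)
    (X : Ω → α) (Y : Ω → β) (Z : Ω → γ) : 0 ≤ cmi p X Y Z := by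
  have hrsum : ∑ a, ∑ b, ∑ c, prob p (fun ω => (X ω, Y ω, Z ω)) (a, b, c) = 1 := by
    have h := sum_prob p hsum (fun ω => (X ω, Y ω, Z ω))
    rw [Fintype.sum_prod_type] at h
    simp only [Fintype.sum_prod_type] at h
    exact h
  have h := key_ineq
    (fun a b c => prob p (fun ω => (X ω, Y ω, Z ω)) (a, b, c))
    (fun a c => prob p (fun ω => (X ω, Z ω)) (a, c))
    (fun b c => prob p (fun ω => (Y ω, Z ω)) (b, c))
    (fun c => prob p Z c)
    (fun a b c => prob_nonneg p hp _ _)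
    (fun a c => marg_xz p X Y Z a c)
    (fun b c => marg_yz p X Y Z b c)
    (fun c => marg_z p X Z c)
    hrsum
  have e1 : ent p (fun ω => (X ω, Y ω, Z ω))
      = -∑ a, ∑ b, ∑ c, prob p (fun ω => (X ω, Y ω, Z ω)) (a, b, c) *
          Real.logb 2 (prob p (fun ω => (X ω, Y ω, Z ω)) (a, b, c)) := by
    unfold ent
    congr 1
    rw [Fintype.sum_prod_type]
    exact Finset.sum_congr rfl fun a _ => by rw [Fintype.sum_prod_type]
  have e2 : ent p (fun ω => (X ω, Z ω))
      = -∑ a, ∑ c, prob p (fun ω => (X ω, Z ω)) (a, c) *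
          Real.logb 2 (prob p (fun ω => (X ω, Z ω)) (a, c)) := by
    unfold ent
    rw [Fintype.sum_prod_type]
  have e3 : ent p (fun ω => (Y ω, Z ω))
      = -∑ b, ∑ c, prob p (fun ω => (Y ω, Z ω)) (b, c) *
          Real.logb 2 (prob p (fun ω => (Y ω, Z ω)) (b, c)) := by
    unfold ent
    rw [Fintype.sum_prod_type]
  have e4 : ent p Z = -∑ c, prob p Z c * Real.logb 2 (prob p Z c) := rfl
  unfold cmi
  rw [e1, e2, e3, e4]
  exact h

lemma condEnt_nonneg (hp : ∀ ω, 0 ≤ p ω) (hsum : ∑ ω, p ω = 1)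
    (A : Ω → α) (B : Ω → β) : 0 ≤ ent p (fun ω => (A ω, B ω)) - ent p B := by
  have h := cmi_nonneg p hp hsum A A B
  unfold cmi at h
  have e : ent p (fun ω => (A ω, A ω, B ω)) = ent p (fun ω => (A ω, B ω)) :=
    ent_comp_inj p (f := fun q : α × β => (q.1, q.1, q.2))
      (fun q q' hq => by
        simp only [Prod.mk.injEq] at hq
        exact Prod.ext hq.1 hq.2.2)
      (fun ω => (A ω, B ω)) _ (fun ω => rfl)
  rw [e] at h
  linarith

lemma ent_subadd (hp : ∀ ω, 0 ≤ p ω) (hsum : ∑ ω, p ω = 1)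
    (A : Ω → α) (B : Ω → β) : ent p (fun ω => (A ω, B ω)) ≤ ent p A + ent p B := by
  have h := cmi_nonneg p hp hsum A B (fun _ => (0 : Fin 1))
  unfold cmi at h
  have e1 : ent p (fun ω => (A ω, (0 : Fin 1))) = ent p A :=
    ent_comp_inj p (f := fun a : α => (a, (0 : Fin 1)))
      (fun a a' ha => by simpa using congrArg Prod.fst ha) A _ (fun ω => rfl)
  have e2 : ent p (fun ω => (B ω, (0 : Fin 1))) = ent p B :=
    ent_comp_inj p (f := fun b : β => (b, (0 : Fin 1)))
      (fun a a' ha => by simpa using congrArg Prod.fst ha) B _ (fun ω => rfl)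
  have e3 : ent p (fun ω => (A ω, B ω, (0 : Fin 1))) = ent p (fun ω => (A ω, B ω)) :=
    ent_comp_inj p (f := fun q : α × β => (q.1, q.2, (0 : Fin 1)))
      (fun q q' hq => by
        simp only [Prod.mk.injEq] at hq
        exact Prod.ext hq.1 hq.2.1)
      (fun ω => (A ω, B ω)) _ (fun ω => rfl)
  have e4 : ent p (fun _ : Ω => (0 : Fin 1)) = 0 := ent_const p hsum _
  rw [e1, e2, e3, e4] at h
  linarith

end lemmas

theorem stmt8 {Ω : Type*} [Fintype Ω] {α β γ μ ν ρ : Type*}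
    [Fintype α] [DecidableEq α] [Fintype β] [DecidableEq β] [Fintype γ] [DecidableEq γ]
    [Fintype μ] [DecidableEq μ] [Fintype ν] [DecidableEq ν] [Fintype ρ] [DecidableEq ρ]
    (p : Ω → ℝ) (hp : ∀ ω, 0 ≤ p ω) (hsum : ∑ ω, p ω = 1)
    (X : Ω → α) (Y : Ω → β) (Z : Ω → γ)
    (M12 : Ω → μ) (M23 : Ω → ν) (M31 : Ω → ρ)
    (hcorX : condEnt p X (fun ω => (M12 ω, M31 ω)) = 0)
    (hcorY : condEnt p Y (fun ω => (M12 ω, M23 ω)) = 0)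
    (hcorZ : condEnt p Z (fun ω => (M23 ω, M31 ω)) = 0)
    (hprivA : cmi p (fun ω => (M12 ω, M31 ω)) (fun ω => (Y ω, Z ω)) X = 0) :
    ent p M23 ≥ condEnt p (fun ω => (Y ω, Z ω)) X := by
  simp only [cmi] at hprivA
  simp only [condEnt] at hcorY hcorZ ⊢
  -- entropy relabelling identities
  have rel1 : ent p (fun ω => ((M12 ω, M31 ω), (Y ω, Z ω), X ω))
      = ent p (fun ω => ((Y ω, Z ω), X ω, (M12 ω, M31 ω))) :=
    ent_comp_inj p (f := fun q : (β × γ) × α × (μ × ρ) => (q.2.2, q.1, q.2.1))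
      (fun q q' h => by
        simp only [Prod.mk.injEq] at h
        exact Prod.ext h.2.1 (Prod.ext h.2.2 h.1)) _ _ (fun ω => rfl)
  have rel2 : ent p (fun ω => ((M12 ω, M31 ω), X ω))
      = ent p (fun ω => (X ω, (M12 ω, M31 ω))) :=
    ent_comp_inj p (f := fun q : α × (μ × ρ) => (q.2, q.1))
      (fun q q' h => by
        simp only [Prod.mk.injEq] at h
        exact Prod.ext h.2 h.1) _ _ (fun ω => rfl)
  have rel3 : ent p (fun ω => (M23 ω, (Y ω, Z ω), (M12 ω, M31 ω)))
      = ent p (fun ω => ((Y ω, Z ω), M23 ω, M12 ω, M31 ω)) :=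
    ent_comp_inj p (f := fun q : (β × γ) × ν × μ × ρ => (q.2.1, q.1, q.2.2))
      (fun q q' h => by
        simp only [Prod.mk.injEq] at h
        exact Prod.ext h.2.1 (Prod.ext h.1 h.2.2)) _ _ (fun ω => rfl)
  have rel4 : ent p (fun ω => ((Y ω, Z ω), M23 ω, M12 ω, M31 ω))
      = ent p (fun ω => (Y ω, Z ω, M23 ω, M12 ω, M31 ω)) :=
    ent_comp_inj p (f := fun q : β × γ × ν × μ × ρ => ((q.1, q.2.1), q.2.2))
      (fun q q' h => by
        simp only [Prod.mk.injEq] at h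
        exact Prod.ext h.1.1 (Prod.ext h.1.2 h.2)) _ _ (fun ω => rfl)
  have rel5 : ent p (fun ω => (Y ω, M31 ω, (M12 ω, M23 ω)))
      = ent p (fun ω => (Y ω, M23 ω, M12 ω, M31 ω)) :=
    ent_comp_inj p (f := fun q : β × ν × μ × ρ => (q.1, q.2.2.2, q.2.2.1, q.2.1))
      (fun q q' h => by
        simp only [Prod.mk.injEq] at h
        exact Prod.ext h.1 (Prod.ext h.2.2.2 (Prod.ext h.2.2.1 h.2.1))) _ _ (fun ω => rfl)
  have rel6 : ent p (fun ω => (M31 ω, (M12 ω, M23 ω)))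
      = ent p (fun ω => (M23 ω, M12 ω, M31 ω)) :=
    ent_comp_inj p (f := fun q : ν × μ × ρ => (q.2.2, q.2.1, q.1))
      (fun q q' h => by
        simp only [Prod.mk.injEq] at h
        exact Prod.ext h.2.2 (Prod.ext h.2.1 h.1)) _ _ (fun ω => rfl)
  have rel7 : ent p (fun ω => (Z ω, M12 ω, (M23 ω, M31 ω)))
      = ent p (fun ω => (Z ω, M23 ω, M12 ω, M31 ω)) :=
    ent_comp_inj p (f := fun q : γ × ν × μ × ρ => (q.1, q.2.2.1, q.2.1, q.2.2.2))
      (fun q q' h => by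
        simp only [Prod.mk.injEq] at h
        exact Prod.ext h.1 (Prod.ext h.2.2.1 (Prod.ext h.2.1 h.2.2.2))) _ _ (fun ω => rfl)
  have rel8 : ent p (fun ω => (M12 ω, (M23 ω, M31 ω)))
      = ent p (fun ω => (M23 ω, M12 ω, M31 ω)) :=
    ent_comp_inj p (f := fun q : ν × μ × ρ => (q.2.1, q.1, q.2.2))
      (fun q q' h => by
        simp only [Prod.mk.injEq] at h
        exact Prod.ext h.2.1 (Prod.ext h.1 h.2.2)) _ _ (fun ω => rfl)
  -- information inequalities
  have hB := cmi_nonneg p hp hsum (fun ω => (Y ω, Z ω)) X (fun ω => (M12 ω, M31 ω))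
  simp only [cmi] at hB
  have hC := condEnt_nonneg p hp hsum M23 (fun ω => ((Y ω, Z ω), (M12 ω, M31 ω)))
  have hD := ent_subadd p hp hsum M23 (fun ω => (M12 ω, M31 ω))
  have hE := cmi_nonneg p hp hsum Y Z (fun ω => (M23 ω, M12 ω, M31 ω))
  simp only [cmi] at hE
  have hF := cmi_nonneg p hp hsum Y M31 (fun ω => (M12 ω, M23 ω))
  simp only [cmi] at hF
  have hG := cmi_nonneg p hp hsum Z M12 (fun ω => (M23 ω, M31 ω))
  simp only [cmi] at hG
  linarith [rel1, rel2, rel3, rel4, rel5, rel6, rel7, rel8,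
    hprivA, hB, hC, hD, hE, hF, hG, hcorY, hcorZ]
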